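/- The following intersections are nonempty: (i) for all i, j ∈ {0, …, p−1} with i ≤ p−2, j ≠ i and j ≠ i+1, one has f_{i,j}(T_ε) ∩ f_{i+1,j}(T_ε) ≠ ∅; (ii) for all i, j ∈ {0, …, p−1} with j ≤ p−2, i ≠ j and i ≠ j+1, one has f_{i,j}(T_ε) ∩ f_{i,j+1}(T_ε) ≠ ∅; (iii) for all i ∈ {0, …, p−2}, one has f_{i+1,i}(T_ε) ∩ f_{i,i+1}(T_ε) ≠ ∅ and f_{i,i}(T_ε) ∩ f_{i+1,i+1}(T_ε) ≠ ∅. -/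

import Mathlib

noncomputable section

/-- The digit set `D_ε = {(i + δ_{ij} ε, j + δ_{ij} ε) : i, j ∈ {0, …, |p|-1}}`. -/
def Ddiag (p : ℤ) (ε : ℝ) : Set (ℝ × ℝ) :=
  {d | ∃ i j : ℤ, 0 ≤ i ∧ i ≤ |p| - 1 ∧ 0 ≤ j ∧ j ≤ |p| - 1 ∧
      d = ((i : ℝ) + (if i = j then ε else 0), (j : ℝ) + (if i = j then ε else 0))}

/-- The self-similar set `T_ε = {∑_{k=1}^∞ p^{-k} d_k : d_k ∈ D_ε}`. -/
def Tdiag (p : ℤ) (ε : ℝ) : Set (ℝ × ℝ) :=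
  {z | ∃ d : ℕ → ℝ × ℝ, (∀ k, d k ∈ Ddiag p ε) ∧
      z = ∑' k : ℕ, ((p : ℝ) ^ (k + 1))⁻¹ • d k}

/-- The map `f_{i,j}(x, y) = ((x + i + δ_{ij} ε)/p, (y + j + δ_{ij} ε)/p)`. -/
def fdiag (p : ℤ) (ε : ℝ) (i j : ℤ) (z : ℝ × ℝ) : ℝ × ℝ :=
  ((z.1 + (i : ℝ) + (if i = j then ε else 0)) / (p : ℝ),
   (z.2 + (j : ℝ) + (if i = j then ε else 0)) / (p : ℝ))

lemma tsum_geo (p : ℤ) (hp : 2 < p) :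
    ∑' k : ℕ, ((p : ℝ) ^ (k + 1))⁻¹ = ((p : ℝ) - 1)⁻¹ := by
  have hp1 : (1:ℝ) < (p:ℝ) := by exact_mod_cast (by omega : (1:ℤ) < p)
  have hr : |(p:ℝ)⁻¹| < 1 := by
    rw [abs_inv, abs_of_pos (by linarith)]
    rw [inv_lt_one_iff₀]; right; exact hp1
  have h1 : ∑' k : ℕ, ((p : ℝ) ^ (k + 1))⁻¹ = ∑' k : ℕ, ((p:ℝ)⁻¹)^k * (p:ℝ)⁻¹ := by
    congr 1; funext k; rw [inv_pow]; ring
  rw [h1, tsum_mul_right, tsum_geometric_of_abs_lt_one hr]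
  field_simp

lemma summable_geo (p : ℤ) (hp : 2 < p) :
    Summable (fun k : ℕ => ((p : ℝ) ^ (k + 1))⁻¹) := by
  have hp1 : (1:ℝ) < (p:ℝ) := by exact_mod_cast (by omega : (1:ℤ) < p)
  have hr : |(p:ℝ)⁻¹| < 1 := by
    rw [abs_inv, abs_of_pos (by linarith)]
    rw [inv_lt_one_iff₀]; right; exact hp1
  have : Summable (fun k : ℕ => ((p:ℝ)⁻¹)^k * (p:ℝ)⁻¹) :=
    (summable_geometric_of_abs_lt_one hr).mul_right _
  refine this.congr fun k => ?_
  rw [inv_pow]; ring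

lemma const_mem (p : ℤ) (hp : 2 < p) (ε : ℝ) (d : ℝ × ℝ) (hd : d ∈ Ddiag p ε) :
    ((p:ℝ) - 1)⁻¹ • d ∈ Tdiag p ε := by
  refine ⟨fun _ => d, fun _ => hd, ?_⟩
  rw [Summable.tsum_smul_const (summable_geo p hp), tsum_geo p hp]

lemma pt_mem (p : ℤ) (hp : 2 < p) (ε : ℝ) (a b : ℤ)
    (ha : 0 ≤ a) (ha' : a ≤ p - 1) (hb : 0 ≤ b) (hb' : b ≤ p - 1) (hab : a ≠ b) :
    (((a:ℝ))/((p:ℝ)-1), ((b:ℝ))/((p:ℝ)-1)) ∈ Tdiag p ε := by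
  have h := const_mem p hp ε ((a:ℝ) + (if a = b then ε else 0),
      (b:ℝ) + (if a = b then ε else 0))
    ⟨a, b, ha, by rwa [abs_of_pos (by omega)], hb, by rwa [abs_of_pos (by omega)], rfl⟩
  simpa [if_neg hab, Prod.smul_def, div_eq_inv_mul, mul_comm] using h

lemma ptd_mem (p : ℤ) (hp : 2 < p) (ε : ℝ) (a : ℤ)
    (ha : 0 ≤ a) (ha' : a ≤ p - 1) :
    (((a:ℝ)+ε)/((p:ℝ)-1), ((a:ℝ)+ε)/((p:ℝ)-1)) ∈ Tdiag p ε := by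
  have h := const_mem p hp ε ((a:ℝ) + (if a = a then ε else 0),
      (a:ℝ) + (if a = a then ε else 0))
    ⟨a, a, ha, by rwa [abs_of_pos (by omega)], ha, by rwa [abs_of_pos (by omega)], rfl⟩
  simpa [Prod.smul_def, div_eq_inv_mul, mul_comm] using h

theorem stmt18 (p : ℤ) (hp : 2 < p) (ε : ℝ) :
    (∀ i j : ℤ, 0 ≤ i → i ≤ p - 2 → 0 ≤ j → j ≤ p - 1 → j ≠ i → j ≠ i + 1 →
      (fdiag p ε i j '' Tdiag p ε ∩ fdiag p ε (i + 1) j '' Tdiag p ε).Nonempty) ∧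
    (∀ i j : ℤ, 0 ≤ i → i ≤ p - 1 → 0 ≤ j → j ≤ p - 2 → i ≠ j → i ≠ j + 1 →
      (fdiag p ε i j '' Tdiag p ε ∩ fdiag p ε i (j + 1) '' Tdiag p ε).Nonempty) ∧
    (∀ i : ℤ, 0 ≤ i → i ≤ p - 2 →
      (fdiag p ε (i + 1) i '' Tdiag p ε ∩ fdiag p ε i (i + 1) '' Tdiag p ε).Nonempty ∧
      (fdiag p ε i i '' Tdiag p ε ∩ fdiag p ε (i + 1) (i + 1) '' Tdiag p ε).Nonempty) := by
  have hpR : ((p:ℝ) - 1) ≠ 0 := by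
    have : (1:ℝ) < (p:ℝ) := by exact_mod_cast (by omega : (1:ℤ) < p)
    linarith
  refine ⟨?_, ?_, ?_⟩
  · intro i j hi hi' hj hj' hji hji'
    refine ⟨fdiag p ε i j ((((p-1:ℤ):ℝ))/((p:ℝ)-1), ((1:ℤ):ℝ)/((p:ℝ)-1)),
      ⟨_, pt_mem p hp ε (p-1) 1 (by omega) (by omega) (by omega) (by omega) (by omega), rfl⟩,
      ⟨(((0:ℤ):ℝ)/((p:ℝ)-1), ((1:ℤ):ℝ)/((p:ℝ)-1)),
        pt_mem p hp ε 0 1 (by omega) (by omega) (by omega) (by omega) (by omega), ?_⟩⟩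
    simp only [fdiag, if_neg (Ne.symm hji), if_neg (Ne.symm hji')]
    push_cast
    rw [Prod.mk.injEq]; constructor <;> (field_simp; try ring)
  · intro i j hi hi' hj hj' hij hij'
    refine ⟨fdiag p ε i j (((1:ℤ):ℝ)/((p:ℝ)-1), (((p-1:ℤ):ℝ))/((p:ℝ)-1)),
      ⟨_, pt_mem p hp ε 1 (p-1) (by omega) (by omega) (by omega) (by omega) (by omega), rfl⟩,
      ⟨(((1:ℤ):ℝ)/((p:ℝ)-1), ((0:ℤ):ℝ)/((p:ℝ)-1)),
        pt_mem p hp ε 1 0 (by omega) (by omega) (by omega) (by omega) (by omega), ?_⟩⟩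
    simp only [fdiag, if_neg hij, if_neg hij']
    push_cast
    rw [Prod.mk.injEq]; constructor <;> (field_simp; try ring)
  · intro i hi hi'
    constructor
    · refine ⟨fdiag p ε (i+1) i ((((0:ℤ):ℝ))/((p:ℝ)-1), (((p-1:ℤ):ℝ))/((p:ℝ)-1)),
        ⟨_, pt_mem p hp ε 0 (p-1) (by omega) (by omega) (by omega) (by omega) (by omega), rfl⟩,
        ⟨((((p-1:ℤ):ℝ))/((p:ℝ)-1), (((0:ℤ):ℝ))/((p:ℝ)-1)),
          pt_mem p hp ε (p-1) 0 (by omega) (by omega) (by omega) (by omega) (by omega), ?_⟩⟩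
      simp only [fdiag, if_neg (by omega : ¬ i + 1 = i), if_neg (by omega : ¬ i = i + 1)]
      push_cast
      rw [Prod.mk.injEq]; constructor <;> (field_simp; try ring)
    · refine ⟨fdiag p ε i i ((((p-1:ℤ):ℝ)+ε)/((p:ℝ)-1), (((p-1:ℤ):ℝ)+ε)/((p:ℝ)-1)),
        ⟨_, ptd_mem p hp ε (p-1) (by omega) (by omega), rfl⟩,
        ⟨((((0:ℤ):ℝ)+ε)/((p:ℝ)-1), (((0:ℤ):ℝ)+ε)/((p:ℝ)-1)),
          ptd_mem p hp ε 0 (by omega) (by omega), ?_⟩⟩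
      simp only [fdiag, if_pos rfl]
      push_cast
      rw [Prod.mk.injEq]; constructor <;> (field_simp; try ring)
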